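/- Let N ≥ 2, d ≥ max{31, 9N−13, 13N−31}, n ≥ 7d+14, and let λ be a partition of n with all parts in S_d^N. For i ≥ 1 let p_i be the multiplicity in λ of the i-th smallest element x_i^N of S_d^N, and set α := Σ_{i≥3} (x_i^N − y_i) p_i, where y_i is the i-th smallest element of T_{5,d}. If p_1 + α < (N−2)p_2, then p_2 ≥ 8. -/

import Mathlib

/-- `rho A n` is the number of partitions of `n` all of whose parts lie in `A`. -/
noncomputable def rho (A : Set ℕ) (n : ℕ) : ℕ :=
  Nat.card {p : n.Partition // ∀ x ∈ p.parts, x ∈ A}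

/-- `qpart a d n` is the number of partitions of `n` into parts that are all `≥ a`
and pairwise differ by at least `d` (so, in particular, are distinct when `d ≥ 1`). -/
noncomputable def qpart (a d n : ℕ) : ℕ :=
  Nat.card {p : n.Partition //
    (∀ x ∈ p.parts, a ≤ x) ∧
    (∀ x ∈ p.parts, p.parts.count x ≤ 1) ∧
    (∀ x ∈ p.parts, ∀ y ∈ p.parts, x ≠ y → d ≤ max x y - min x y)}

/-- Positive integers congruent to `±a` modulo `m`, excluding `m - a`. -/
noncomputable def QminusSet (a m : ℕ) : Set ℕ :=
  {x | x % m = a % m ∨ x % m = (m - a) % m} \ {m - a}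

/-- `Qminus a d n` counts partitions of `n` into parts `≡ ±a (mod d+3)`,
excluding the part `d+3-a`. -/
noncomputable def Qminus (a d n : ℕ) : ℕ := rho (QminusSet a (d + 3)) n

/-- `Qmm a d n` counts partitions of `n` into parts `≡ ±a (mod d+3)`,
excluding both the parts `a` and `d+3-a`. -/
noncomputable def Qmm (a d n : ℕ) : ℕ := rho (QminusSet a (d + 3) \ {a}) n

/-- `Tset s d` is the set of naturals congruent to `1` or to `d + 2^j` for some
`1 ≤ j ≤ s - 1` modulo `2d`. -/
def Tset (s d : ℕ) : Set ℕ :=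
  {y | y % (2 * d) = 1 % (2 * d) ∨
    ∃ j, 1 ≤ j ∧ j + 1 ≤ s ∧ y % (2 * d) = (d + 2 ^ j) % (2 * d)}

/-- `T5 d` : naturals congruent to `1, d+2, d+4, d+8` or `d+16` modulo `2d`. -/
def T5 (d : ℕ) : Set ℕ := Tset 5 d

/-- `Sset d N` : naturals congruent to `±1` modulo `d-N+3`, excluding `d-N+2`. -/
def Sset (d N : ℕ) : Set ℕ :=
  {x | x % (d - N + 3) = 1 % (d - N + 3) ∨ x % (d - N + 3) = (d - N + 2) % (d - N + 3)}
    \ {d - N + 2}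

/-- `xN d N i` is the `i`-th smallest element of `Sset d N` (1-indexed). -/
noncomputable def xN (d N i : ℕ) : ℕ := Nat.nth (· ∈ Sset d N) (i - 1)

/-- `yT d i` is the `i`-th smallest element of `T5 d` (1-indexed). -/
noncomputable def yT (d i : ℕ) : ℕ := Nat.nth (· ∈ T5 d) (i - 1)

/-! ### Auxiliary machinery -/

/-- Explicit enumeration of `Sset d N` where `m = d - N + 3`. -/
def fS (m k : ℕ) : ℕ :=
  if k = 0 then 1 else (k+1)/2 * m + (if k % 2 = 1 then 1 else m - 1)

/-- Explicit enumeration of `T5 d`. -/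
def gT (d k : ℕ) : ℕ :=
  2 * (k/5) * d + (if k % 5 = 0 then 1 else d + 2^(k % 5))

lemma nth_range (f : ℕ → ℕ) (hf : StrictMono f) (k : ℕ) :
    Nat.nth (· ∈ Set.range f) k = f k := by
  classical
  have h1 : Nat.count (· ∈ Set.range f) (f k) = k := by
    rw [Nat.count_eq_card_filter_range]
    have h2 : (Finset.range (f k)).filter (· ∈ Set.range f) = (Finset.range k).image f := by
      ext x
      simp only [Finset.mem_filter, Finset.mem_range, Finset.mem_image, Set.mem_range]
      constructor
      · rintro ⟨hx, t, rfl⟩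
        exact ⟨t, hf.lt_iff_lt.mp hx, rfl⟩
      · rintro ⟨t, ht, rfl⟩
        exact ⟨hf ht, t, rfl⟩
    rw [h2, Finset.card_image_of_injective _ hf.injective, Finset.card_range]
  have h3 := Nat.nth_count (p := (· ∈ Set.range f)) (n := f k) ⟨k, rfl⟩
  rw [h1] at h3
  exact h3

lemma fS_mono {m : ℕ} (hm : 3 ≤ m) : StrictMono (fS m) := by
  apply strictMono_nat_of_lt_succ
  intro k
  obtain ⟨mm, rfl⟩ : ∃ mm, m = mm + 3 := ⟨m - 3, by omega⟩
  rcases Nat.even_or_odd k with ⟨j, hj⟩ | ⟨j, hj⟩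
  · rcases Nat.eq_zero_or_pos j with rfl | hj1
    · subst hj; simp [fS]
    · subst hj
      have e1 : j + j = 2 * j := by ring
      rw [e1]
      simp only [fS, if_neg (by omega : ¬ 2*j = 0), if_neg (by omega : ¬ 2*j+1 = 0),
        if_neg (by omega : ¬ (2*j) % 2 = 1), if_pos (by omega : (2*j+1) % 2 = 1)]
      have e2 : (2*j+1)/2 = j := by omega
      have e3 : (2*j+1+1)/2 = j + 1 := by omega
      rw [e2, e3]
      have h5 : (j+1) * (mm+3) = j * (mm+3) + (mm+3) := by ring
      omega
  · subst hj
    simp only [fS, if_neg (by omega : ¬ 2*j+1 = 0), if_neg (by omega : ¬ 2*j+1+1 = 0),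
      if_pos (by omega : (2*j+1) % 2 = 1), if_neg (by omega : ¬ (2*j+1+1) % 2 = 1)]
    have e2 : (2*j+1+1)/2 = j+1 := by omega
    have e3 : (2*j+1+1+1)/2 = j+1 := by omega
    rw [e2, e3]
    omega

lemma gT_mono {d : ℕ} (hd : 17 ≤ d) : StrictMono (gT d) := by
  apply strictMono_nat_of_lt_succ
  intro k
  unfold gT
  rcases Nat.lt_or_ge (k % 5) 4 with h | h
  · have e1 : (k+1)/5 = k/5 := by omega
    have e2 : (k+1) % 5 = k % 5 + 1 := by omega
    rw [e1, e2, if_neg (show ¬(k % 5 + 1 = 0) by omega)]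
    have h2 : 2 ^ (k % 5) < 2 ^ (k % 5 + 1) := by
      exact Nat.pow_lt_pow_right (by norm_num) (by omega)
    have h3 : 2 ^ (k % 5 + 1) ≤ 2 ^ 4 := Nat.pow_le_pow_right (by norm_num) (by omega)
    split
    · omega
    · omega
  · have h4 : k % 5 = 4 := by omega
    have e1 : (k+1)/5 = k/5 + 1 := by omega
    have e2 : (k+1) % 5 = 0 := by omega
    rw [e1, e2, h4, if_neg (show ¬(4 = 0) by norm_num), if_pos rfl]
    have h5 : 2*(k/5+1)*d = 2*(k/5)*d + 2*d := by ring
    norm_num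
    omega

lemma fS_range {d N m : ℕ} (hm : m = d - N + 3) (hm3 : 3 ≤ m) :
    Sset d N = Set.range (fS m) := by
  have h2 : d - N + 2 = m - 1 := by omega
  ext x
  simp only [Sset, Set.mem_diff, Set.mem_setOf_eq, Set.mem_singleton_iff, Set.mem_range, ← hm, h2]
  have h1m : 1 % m = 1 := Nat.mod_eq_of_lt (by omega)
  have hmm : (m - 1) % m = m - 1 := Nat.mod_eq_of_lt (by omega)
  rw [h1m, hmm]
  constructor
  · rintro ⟨hmod | hmod, hne⟩
    · have hx : m * (x / m) + 1 = x := by rw [← hmod]; exact Nat.div_add_mod x m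
      rcases Nat.eq_zero_or_pos (x / m) with hq | hq
      · rw [hq] at hx
        refine ⟨0, ?_⟩
        simp only [fS, reduceIte]
        omega
      · refine ⟨2 * (x/m) - 1, ?_⟩
        unfold fS
        rw [if_neg (show ¬(2*(x/m)-1 = 0) by omega),
          if_pos (show (2*(x/m)-1) % 2 = 1 by omega),
          (show (2*(x/m)-1+1)/2 = x/m by omega), Nat.mul_comm]
        exact hx
    · have hx : m * (x / m) + (m - 1) = x := by rw [← hmod]; exact Nat.div_add_mod x m
      have hq : 0 < x / m := by
        rcases Nat.eq_zero_or_pos (x / m) with hq | hq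
        · exfalso; apply hne; rw [hq] at hx; omega
        · exact hq
      refine ⟨2 * (x/m), ?_⟩
      unfold fS
      rw [if_neg (show ¬(2*(x/m) = 0) by omega),
        if_neg (show ¬((2*(x/m)) % 2 = 1) by omega),
        (show (2*(x/m)+1)/2 = x/m by omega), Nat.mul_comm]
      exact hx
  · rintro ⟨k, rfl⟩
    rcases Nat.eq_zero_or_pos k with rfl | hk
    · refine ⟨Or.inl ?_, ?_⟩
      · simpa only [fS, reduceIte] using h1m
      · simp only [fS, reduceIte]; omega
    · rcases Nat.even_or_odd k with ⟨j, hj⟩ | ⟨j, hj⟩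
      · subst hj
        have e1 : j + j = 2 * j := by ring
        unfold fS
        rw [e1, if_neg (show ¬(2*j = 0) by omega),
          if_neg (show ¬((2*j) % 2 = 1) by omega),
          (show (2*j+1)/2 = j by omega)]
        have hmod : (j * m + (m-1)) % m = m - 1 := by
          rw [Nat.mul_comm, Nat.mul_add_mod]
          exact hmm
        refine ⟨Or.inr hmod, ?_⟩
        intro heq
        rw [add_eq_right] at heq
        rcases Nat.mul_eq_zero.mp heq with h | h <;> omega
      · subst hj
        unfold fS
        rw [if_neg (show ¬(2*j+1 = 0) by omega),
          if_pos (show (2*j+1) % 2 = 1 by omega),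
          (show (2*j+1+1)/2 = j+1 by omega)]
        have hmod : ((j+1) * m + 1) % m = 1 := by
          rw [Nat.mul_comm, Nat.mul_add_mod]
          exact h1m
        refine ⟨Or.inl hmod, ?_⟩
        intro heq
        have hge : m ≤ (j+1) * m := Nat.le_mul_of_pos_left m (by omega)
        have h7 : m + 1 ≤ m - 1 := by
          rw [← heq]
          exact Nat.add_le_add_right hge 1
        omega

lemma gT_range {d : ℕ} (hd : 17 ≤ d) : T5 d = Set.range (gT d) := by
  ext y
  have h2d : 1 % (2*d) = 1 := Nat.mod_eq_of_lt (by omega)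
  simp only [T5, Tset, Set.mem_setOf_eq, Set.mem_range, h2d]
  constructor
  · rintro (hmod | ⟨j, hj1, hj5, hmod⟩)
    · have hx : 2*d * (y / (2*d)) + 1 = y := by rw [← hmod]; exact Nat.div_add_mod y (2*d)
      refine ⟨5 * (y/(2*d)), ?_⟩
      unfold gT
      rw [if_pos (show (5*(y/(2*d))) % 5 = 0 by omega),
        (show (5*(y/(2*d)))/5 = y/(2*d) by omega),
        (show 2 * (y/(2*d)) * d = 2*d*(y/(2*d)) by ring)]
      exact hx
    · have hpow : 2 ^ j < d := by
        have : 2 ^ j ≤ 2 ^ 4 := Nat.pow_le_pow_right (by norm_num) (by omega)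
        omega
      have hc : (d + 2^j) % (2*d) = d + 2^j := Nat.mod_eq_of_lt (by omega)
      rw [hc] at hmod
      have hx : 2*d * (y / (2*d)) + (d + 2^j) = y := by
        rw [← hmod]; exact Nat.div_add_mod y (2*d)
      refine ⟨5 * (y/(2*d)) + j, ?_⟩
      unfold gT
      rw [(show (5*(y/(2*d))+j) % 5 = j by omega),
        if_neg (show ¬(j = 0) by omega),
        (show (5*(y/(2*d))+j)/5 = y/(2*d) by omega),
        (show 2 * (y/(2*d)) * d = 2*d*(y/(2*d)) by ring)]
      exact hx
  · rintro ⟨k, rfl⟩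
    unfold gT
    have hprod : 2 * (k/5) * d = 2*d*(k/5) := by ring
    rcases Nat.eq_zero_or_pos (k % 5) with h5 | h5
    · rw [if_pos h5]
      left
      rw [hprod, Nat.mul_add_mod]
      exact h2d
    · rw [if_neg (by omega)]
      right
      refine ⟨k % 5, h5, by omega, ?_⟩
      rw [hprod, Nat.mul_add_mod]

lemma key_arith_even (t N a r b : ℕ) (hN : 2 ≤ N) (h31 : 31 ≤ t + N)
    (h9 : 8*N ≤ t + 13) (h13 : 12*N ≤ t + 31) (hr : r < 5) (hk : 2 ≤ 5*a + r)
    (hb : 5*a + r + 2 = 2*b) :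
    2*a*(t+N) + (if r = 0 then 1 else (t+N) + 2^r) + 7*N ≤ b*(t+3) + 13 := by
  have P1 : (5*a+r+2)*t = (2*b)*t := by rw [hb]
  have P1' : 15*a + 3*r + 6 = 6*b := by omega
  have P2 : a*(9*N) ≤ a*(t+N+13) := Nat.mul_le_mul_left a (by omega)
  have P3 : a*(13*N) ≤ a*(t+N+31) := Nat.mul_le_mul_left a (by omega)
  rcases Nat.lt_or_ge a 2 with ha | ha
  · interval_cases a <;> interval_cases r <;> norm_num <;> first | omega | linarith
  · have P4 : 2*t ≤ a*t := Nat.mul_le_mul_right t ha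
    have P5 : 2*N ≤ a*N := Nat.mul_le_mul_right N ha
    interval_cases r <;> norm_num <;> first | omega | linarith

lemma key_arith_odd (t N a r b : ℕ) (hN : 2 ≤ N) (h31 : 31 ≤ t + N)
    (h9 : 8*N ≤ t + 13) (h13 : 12*N ≤ t + 31) (hr : r < 5) (hk : 2 ≤ 5*a + r)
    (hb : 5*a + r + 1 = 2*b) :
    2*a*(t+N) + (if r = 0 then 1 else (t+N) + 2^r) + 7*N ≤ b*(t+3) + 15 := by
  have P1 : (5*a+r+1)*t = (2*b)*t := by rw [hb]
  have P1' : 15*a + 3*r + 3 = 6*b := by omega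
  have P2 : a*(9*N) ≤ a*(t+N+13) := Nat.mul_le_mul_left a (by omega)
  have P3 : a*(13*N) ≤ a*(t+N+31) := Nat.mul_le_mul_left a (by omega)
  rcases Nat.lt_or_ge a 2 with ha | ha
  · interval_cases a <;> interval_cases r <;> norm_num <;> first | omega | linarith
  · have P4 : 2*t ≤ a*t := Nat.mul_le_mul_right t ha
    have P5 : 2*N ≤ a*N := Nat.mul_le_mul_right N ha
    interval_cases r <;> norm_num <;> first | omega | linarith

lemma key (d N m k : ℕ) (hm : m = d - N + 3) (hN : 2 ≤ N) (hd31 : 31 ≤ d)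
    (h9 : 9*N ≤ d + 13) (h13 : 13*N ≤ d + 31) (hk : 2 ≤ k) :
    gT d k + 7*N ≤ fS m k + 14 := by
  have hNd : N ≤ d := by omega
  set t := d - N with ht
  have hdt : d = t + N := by omega
  have hm' : m = t + 3 := by omega
  rcases Nat.even_or_odd k with ⟨j, hj⟩ | ⟨j, hj⟩
  · -- k = j + j, j ≥ 1, fS m k = j*m + (m-1)
    have hfe : fS m k + 1 = (j+1)*m := by
      unfold fS
      rw [if_neg (show ¬ k = 0 by omega),
        (show (k+1)/2 = j by omega),
        if_neg (show ¬(k % 2 = 1) by omega)]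
      have h5 : (j+1)*m = j*m + m := by ring
      omega
    have harith := key_arith_even t N (k/5) (k%5) (j+1) hN (by omega) (by omega) (by omega)
      (Nat.mod_lt _ (by norm_num)) (by omega) (by omega)
    rw [← hdt, ← hm'] at harith
    unfold gT
    rcases Nat.eq_zero_or_pos (k % 5) with h5 | h5
    · rw [h5] at harith ⊢
      simp only [reduceIte] at harith ⊢
      omega
    · rw [if_neg (show ¬(k % 5 = 0) by omega)] at harith ⊢
      generalize (2:ℕ)^(k % 5) = c at harith ⊢
      omega
  · -- k = 2*j + 1, fS m k = (j+1)*m + 1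
    have hfo : fS m k = (j+1)*m + 1 := by
      unfold fS
      rw [if_neg (show ¬ k = 0 by omega),
        (show (k+1)/2 = j+1 by omega),
        if_pos (show k % 2 = 1 by omega)]
    have harith := key_arith_odd t N (k/5) (k%5) (j+1) hN (by omega) (by omega) (by omega)
      (Nat.mod_lt _ (by norm_num)) (by omega) (by omega)
    rw [← hdt, ← hm'] at harith
    unfold gT
    rcases Nat.eq_zero_or_pos (k % 5) with h5 | h5
    · rw [h5] at harith ⊢
      simp only [reduceIte] at harith ⊢
      omega
    · rw [if_neg (show ¬(k % 5 = 0) by omega)] at harith ⊢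
      generalize (2:ℕ)^(k % 5) = c at harith ⊢
      omega

lemma sum_of_two (s : Multiset ℕ) (a b : ℕ) (hab : a ≠ b) (h : ∀ x ∈ s, x = a ∨ x = b) :
    s.sum = s.count a * a + s.count b * b := by
  induction s using Multiset.induction with
  | empty => simp
  | cons x t ih =>
    have hx := h x (Multiset.mem_cons_self x t)
    have ht : ∀ y ∈ t, y = a ∨ y = b := fun y hy => h y (Multiset.mem_cons_of_mem hy)
    rw [Multiset.sum_cons, ih ht, Multiset.count_cons, Multiset.count_cons]
    rcases hx with rfl | rfl
    · simp [hab, hab.symm]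
      ring
    · simp [hab, hab.symm]
      ring

lemma le_of_strictMono_one (f : ℕ → ℕ) (hf : StrictMono f) (h0 : 1 ≤ f 0) :
    ∀ k, k + 1 ≤ f k := by
  intro k
  induction k with
  | zero => exact h0
  | succ k ih => exact Nat.lt_of_le_of_lt ih (hf (Nat.lt_succ_self k))

theorem stmt5 (N d n : ℕ) (hN : 2 ≤ N)
    (hd : max 31 (max (9 * N - 13) (13 * N - 31)) ≤ d) (hn : 7 * d + 14 ≤ n)
    (l : n.Partition) (hl : ∀ x ∈ l.parts, x ∈ Sset d N)
    (hlt : (l.parts.count (xN d N 1) : ℤ)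
        + ∑ i ∈ Finset.Icc 3 n,
            ((xN d N i : ℤ) - (yT d i : ℤ)) * (l.parts.count (xN d N i) : ℤ)
      < ((N : ℤ) - 2) * (l.parts.count (xN d N 2) : ℤ)) :
    8 ≤ l.parts.count (xN d N 2) := by
  by_contra hcon
  push_neg at hcon
  have hd31 : 31 ≤ d := le_trans (le_max_left _ _) hd
  have h9 : 9 * N ≤ d + 13 := by
    have := le_trans (le_trans (le_max_left _ _) (le_max_right 31 _)) hd
    omega
  have h13 : 13 * N ≤ d + 31 := by
    have := le_trans (le_trans (le_max_right _ _) (le_max_right 31 _)) hd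
    omega
  have hNd : N ≤ d := by omega
  set m := d - N + 3 with hmdef
  have hm : m = d - N + 3 := rfl
  have hm3 : 3 ≤ m := by omega
  have hSr : Sset d N = Set.range (fS m) := fS_range hm hm3
  have hTr : T5 d = Set.range (gT d) := gT_range (by omega)
  have hfmono := fS_mono hm3
  have hgmono := gT_mono (show 17 ≤ d by omega)
  have hx : ∀ i, xN d N i = fS m (i - 1) := by
    intro i
    unfold xN
    rw [hSr, nth_range _ hfmono]
  have hy : ∀ i, yT d i = gT d (i - 1) := by
    intro i
    unfold yT
    rw [hTr, nth_range _ hgmono]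
  have hkey2 : ∀ i, 3 ≤ i → (7*(N:ℤ) - 14) ≤ (xN d N i : ℤ) - (yT d i : ℤ) := by
    intro i h3i
    have hk := key d N m (i-1) hm hN hd31 h9 h13 (by omega)
    rw [hx i, hy i]
    omega
  have hsum : (7*(N:ℤ) - 14) * ∑ i ∈ Finset.Icc 3 n, (l.parts.count (xN d N i) : ℤ)
      ≤ ∑ i ∈ Finset.Icc 3 n, ((xN d N i : ℤ) - (yT d i : ℤ)) * (l.parts.count (xN d N i) : ℤ) := by
    rw [Finset.mul_sum]
    apply Finset.sum_le_sum
    intro i hi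
    exact mul_le_mul_of_nonneg_right (hkey2 i (Finset.mem_Icc.mp hi).1) (by positivity)
  have hScast : ((∑ i ∈ Finset.Icc 3 n, l.parts.count (xN d N i) : ℕ) : ℤ)
      = ∑ i ∈ Finset.Icc 3 n, (l.parts.count (xN d N i) : ℤ) := by
    push_cast
    rfl
  have hmain : (l.parts.count (xN d N 1) : ℤ)
      + (7*(N:ℤ) - 14) * ((∑ i ∈ Finset.Icc 3 n, l.parts.count (xN d N i) : ℕ) : ℤ)
      < ((N:ℤ) - 2) * (l.parts.count (xN d N 2) : ℤ) := by
    rw [hScast]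
    linarith
  have hP2 : ((l.parts.count (xN d N 2) : ℕ) : ℤ) ≤ 7 := by exact_mod_cast Nat.lt_succ_iff.mp hcon
  have h72 : ((N:ℤ) - 2) * (l.parts.count (xN d N 2) : ℤ) ≤ ((N:ℤ) - 2) * 7 :=
    mul_le_mul_of_nonneg_left hP2 (by push_cast; omega)
  have hmain2 : (l.parts.count (xN d N 1) : ℤ)
      + (7*(N:ℤ) - 14) * ((∑ i ∈ Finset.Icc 3 n, l.parts.count (xN d N i) : ℕ) : ℤ)
      < 7*(N:ℤ) - 14 := by linarith
  have hS0 : (∑ i ∈ Finset.Icc 3 n, l.parts.count (xN d N i)) = 0 := by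
    by_contra hS
    have h1S : (1:ℤ) ≤ ((∑ i ∈ Finset.Icc 3 n, l.parts.count (xN d N i) : ℕ) : ℤ) := by
      exact_mod_cast Nat.one_le_iff_ne_zero.mpr hS
    have h2 : (7*(N:ℤ)-14) * 1 ≤ (7*(N:ℤ)-14) * ((∑ i ∈ Finset.Icc 3 n, l.parts.count (xN d N i) : ℕ) : ℤ) :=
      mul_le_mul_of_nonneg_left h1S (by push_cast; omega)
    have hP1 : (0:ℤ) ≤ (l.parts.count (xN d N 1) : ℤ) := Nat.cast_nonneg _
    linarith
  have hP1b : (l.parts.count (xN d N 1) : ℤ) < 7*(N:ℤ) - 14 := by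
    rw [hS0] at hmain2
    push_cast at hmain2
    linarith
  have hP1n : l.parts.count (xN d N 1) + 15 ≤ 7*N := by omega
  have hzero : ∀ i ∈ Finset.Icc 3 n, l.parts.count (xN d N i) = 0 :=
    Finset.sum_eq_zero_iff.mp hS0
  have hparts2 : ∀ x ∈ l.parts, x = 1 ∨ x = m + 1 := by
    intro x hxp
    have hxS : x ∈ Sset d N := hl x hxp
    rw [hSr] at hxS
    obtain ⟨k, rfl⟩ := hxS
    rcases Nat.lt_or_ge k 2 with hk2 | hk2
    · interval_cases k
      · left; simp [fS]
      · right; norm_num [fS]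
    · exfalso
      have hle : fS m k ≤ n := by
        have h6 := Multiset.single_le_sum (fun y _ => Nat.zero_le y) _ hxp
        rwa [l.parts_sum] at h6
      have hkk : k + 1 ≤ fS m k := le_of_strictMono_one _ hfmono (by simp [fS]) k
      have hmem : k + 1 ∈ Finset.Icc 3 n := Finset.mem_Icc.mpr ⟨by omega, by omega⟩
      have hc0 := hzero (k+1) hmem
      rw [hx (k+1)] at hc0
      simp only [Nat.add_sub_cancel] at hc0
      have hpos := Multiset.count_pos.mpr hxp
      omega
  have h1 : xN d N 1 = 1 := by rw [hx]; simp [fS]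
  have h2 : xN d N 2 = m + 1 := by rw [hx]; norm_num [fS]
  have hsum2 : n = l.parts.count (xN d N 1) + l.parts.count (xN d N 2) * (m+1) := by
    have h0 := sum_of_two l.parts 1 (m+1) (by omega) hparts2
    rw [l.parts_sum] at h0
    rw [h1, h2]
    omega
  have hP2n : l.parts.count (xN d N 2) ≤ 7 := by omega
  have hmul : l.parts.count (xN d N 2) * (m+1) ≤ 7 * (m+1) := Nat.mul_le_mul_right _ hP2n
  omega
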